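/- Let L be a field, G a group, ρ: G → GL_n(L) a representation, and ε: G → L^× a character such that ρ ⊗ ε is equivalent to ρ. For g ∈ G write the characteristic polynomial of ρ(g) as X^n + Σ_{i=1}^n a_i(g) X^{n−i}. Then: (a) ε(g)^n = 1 for every g ∈ G (so the order of ε divides n); and (b) for every g ∈ G and every i ∈ {1, …, n} with a_i(g) ≠ 0 one has ε(g)^i = 1. -/

import Mathlib

open Matrix Polynomial

noncomputable section

/-- Characteristic polynomial is invariant under conjugation. -/
lemma charpoly_conj_aux {L : Type*} [Field L] {n : ℕ}
    (M A : Matrix (Fin n) (Fin n) L) (hM : IsUnit M) :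
    (M * A * M⁻¹).charpoly = A.charpoly := by
  have hdet : IsUnit M.det := (Matrix.isUnit_iff_isUnit_det M).mp hM
  have h1 : M * M⁻¹ = 1 := Matrix.mul_nonsing_inv M hdet
  have h2 : M⁻¹ * M = 1 := Matrix.nonsing_inv_mul M hdet
  set P : Matrix (Fin n) (Fin n) L →+* Matrix (Fin n) (Fin n) L[X] :=
    (C : L →+* L[X]).mapMatrix with hP
  have key : charmatrix (M * A * M⁻¹) = P M * charmatrix A * P M⁻¹ := by
    simp only [charmatrix, mul_sub, sub_mul]
    congr 1
    · -- P M * scalar X * P M⁻¹ = scalar X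
      have hc : P M * Matrix.scalar (Fin n) (X : L[X]) =
          Matrix.scalar (Fin n) (X : L[X]) * P M :=
        (Matrix.scalar_commute (X : L[X]) (fun r => Commute.all _ _) (P M)).symm
      rw [hc, mul_assoc, ← _root_.map_mul, h1, _root_.map_one, mul_one]
    · rw [← _root_.map_mul, ← _root_.map_mul]
  unfold Matrix.charpoly
  rw [key, Matrix.det_mul, Matrix.det_mul]
  have h3 : (P M).det * (P M⁻¹).det = 1 := by
    rw [← Matrix.det_mul, ← _root_.map_mul, h1, _root_.map_one, Matrix.det_one]
  calc (P M).det * (charmatrix A).det * (P M⁻¹).det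
      = (P M).det * (P M⁻¹).det * (charmatrix A).det := by ring
    _ = (charmatrix A).det := by rw [h3, one_mul]

lemma coeff_aeval_C_mul_X {L : Type*} [CommRing L] (u : L) (p : L[X]) (k : ℕ) :
    (aeval (C u * X) p).coeff k = p.coeff k * u ^ k := by
  induction p using Polynomial.induction_on' with
  | add p q hp hq => simp [hp, hq, add_mul]
  | monomial i a =>
      rw [aeval_monomial, Polynomial.algebraMap_eq]
      rw [mul_pow, ← C_pow, ← mul_assoc, ← _root_.map_mul]
      rw [coeff_C_mul, coeff_X_pow, coeff_monomial]
      rcases eq_or_ne i k with h | h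
      · subst h; simp
      · rw [if_neg (Ne.symm h), if_neg h, mul_zero, zero_mul]

/-- Coefficients of the characteristic polynomial of a scalar multiple. -/
lemma charpoly_smul_coeff {L : Type*} [Field L] {n : ℕ}
    (A : Matrix (Fin n) (Fin n) L) (c : Lˣ) (k : ℕ) (hk : k ≤ n) :
    ((c : L) • A).charpoly.coeff k = (c : L) ^ (n - k) * A.charpoly.coeff k := by
  set u : L := (c : L)⁻¹
  have hcu : (c : L) * u = 1 := mul_inv_cancel₀ c.ne_zero
  set φ := aeval (R := L) (C u * X) with hφ
  have key : charmatrix ((c : L) • A) = C (c : L) • (charmatrix A).map φ := by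
    refine Matrix.ext fun i j => ?_
    rw [Matrix.smul_apply, Matrix.map_apply, hφ]
    by_cases h : i = j
    · subst h
      simp only [charmatrix_apply_eq, Matrix.smul_apply, map_sub, aeval_X, aeval_C,
        Polynomial.algebraMap_eq, smul_eq_mul, smul_sub]
      rw [mul_sub, ← mul_assoc, ← C_mul, hcu, C_1, one_mul, ← C_mul]
    · rw [charmatrix_apply_ne _ _ _ h, charmatrix_apply_ne _ _ _ h, Matrix.smul_apply]
      simp only [map_neg, aeval_C, Polynomial.algebraMap_eq, smul_eq_mul, mul_neg]
      rw [← C_mul]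
  have hdet : ((c : L) • A).charpoly = C ((c : L) ^ n) * φ A.charpoly := by
    unfold Matrix.charpoly
    rw [key, Matrix.det_smul, Fintype.card_fin, AlgHom.map_det, ← C_pow]
    rfl
  rw [hdet, coeff_C_mul, hφ, coeff_aeval_C_mul_X]
  have h1 : (c : L) ^ (n - k) * (c : L) ^ k = (c : L) ^ n := by
    rw [← pow_add, Nat.sub_add_cancel hk]
  have h2 : (c : L) ^ k * u ^ k = 1 := by rw [← mul_pow, hcu, one_pow]
  calc (c:L) ^ n * (A.charpoly.coeff k * u ^ k)
      = (c:L)^(n-k) * ((c:L)^k * u^k) * A.charpoly.coeff k := by rw [← h1]; ring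
    _ = (c:L)^(n-k) * A.charpoly.coeff k := by rw [h2, mul_one]

/-- If `ρ ⊗ ε` is equivalent to `ρ`, then (a) `ε(g)^n = 1` for all `g` and (b) whenever
the coefficient `a_i(g)` of `X^{n-i}` in the characteristic polynomial of `ρ(g)` is
nonzero, `ε(g)^i = 1`. -/
theorem self_twist_epsilon_order
    {G : Type*} [Group G] {L : Type*} [Field L] {n : ℕ}
    (ρ : G →* Matrix (Fin n) (Fin n) L) (ε : G →* Lˣ)
    (hequiv : ∃ M : Matrix (Fin n) (Fin n) L, IsUnit M ∧
      ∀ g, (ε g : L) • ρ g = M * ρ g * M⁻¹) :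
    ∀ g : G, (ε g : L) ^ n = 1 ∧
      ∀ i : ℕ, 1 ≤ i → i ≤ n → (ρ g).charpoly.coeff (n - i) ≠ 0 →
        (ε g : L) ^ i = 1 := by
  obtain ⟨M, hM, hconj⟩ := hequiv
  intro g
  have hsame : ((ε g : L) • ρ g).charpoly = (ρ g).charpoly := by
    rw [hconj g, charpoly_conj_aux _ _ hM]
  have hb : ∀ i : ℕ, 1 ≤ i → i ≤ n → (ρ g).charpoly.coeff (n - i) ≠ 0 →
      (ε g : L) ^ i = 1 := by
    intro i hi1 hin hcoeff
    have := charpoly_smul_coeff (ρ g) (ε g) (n - i) (Nat.sub_le _ _)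
    rw [hsame] at this
    have hni : n - (n - i) = i := Nat.sub_sub_self hin
    rw [hni] at this
    have := mul_right_cancel₀ hcoeff (by rw [← this, one_mul] :
      1 * (ρ g).charpoly.coeff (n - i) = (ε g : L) ^ i * (ρ g).charpoly.coeff (n - i))
    exact this.symm
  refine ⟨?_, hb⟩
  rcases Nat.eq_zero_or_pos n with hn | hn
  · simp [hn]
  · apply hb n hn le_rfl
    have hdet : (ρ g).det ≠ 0 := by
      have : IsUnit (ρ g) := (Group.isUnit g).map ρ
      exact ((Matrix.isUnit_iff_isUnit_det _).mp this).ne_zero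
    rw [Nat.sub_self]
    intro h0
    apply hdet
    rw [Matrix.det_eq_sign_charpoly_coeff, h0, mul_zero]
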